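/- Let T be an essentially bounded integrable random variable whose law is atomless. Suppose q ∈ ℝ is such that γ := P(T ≤ q) ∈ (0,1) and E[T·1{T ≤ q}] = τ·γ for some τ ∈ ℝ (i.e. the conditional expectation of T given the event {T ≤ q} equals τ). Then inf_{c ≥ 0} E[max(0, c(τ − T) + 1)] = γ; equivalently, 1 − inf_{c ≥ 0} E[max(0, c(τ − T) + 1)] = P(T > q). -/

import Mathlib

open MeasureTheory

/-- Remark 1 of the paper: for an essentially bounded integrable random
variable `T` with atomless law, if `q` is such that `γ := P(T ≤ q) ∈ (0,1)` and
`E[T·1{T ≤ q}] = τγ`, then `inf_{c ≥ 0} E[max(0, c(τ - T) + 1)] = γ`; equivalently,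
`1 - inf_{c ≥ 0} E[max(0, c(τ - T) + 1)] = P(T > q)`. -/
theorem stmt_15 {Ω : Type*} [MeasurableSpace Ω] (P : Measure Ω) [IsProbabilityMeasure P]
    (T : Ω → ℝ) (hTm : Measurable T) (hTbdd : MemLp T ⊤ P) (hTint : Integrable T P)
    (hatomless : ∀ x : ℝ, P {ω | T ω = x} = 0)
    (q τ γ : ℝ) (hγdef : γ = (P {ω | T ω ≤ q}).toReal) (hγ : γ ∈ Set.Ioo (0 : ℝ) 1)
    (hτ : ∫ ω, T ω * (if T ω ≤ q then (1 : ℝ) else 0) ∂P = τ * γ) :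
    (⨅ c : Set.Ici (0 : ℝ), ∫ ω, max 0 ((c : ℝ) * (τ - T ω) + 1) ∂P) = γ ∧
    1 - (⨅ c : Set.Ici (0 : ℝ), ∫ ω, max 0 ((c : ℝ) * (τ - T ω) + 1) ∂P)
      = (P {ω | q < T ω}).toReal := by
  obtain ⟨hγ0, hγ1⟩ := hγ
  set χ : Ω → ℝ := fun ω => if T ω ≤ q then (1:ℝ) else 0 with hχdef
  have hAmeas : MeasurableSet {ω | T ω ≤ q} := hTm measurableSet_Iic
  have hχeq : χ = Set.indicator {ω | T ω ≤ q} (fun _ => (1:ℝ)) := by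
    funext ω; simp [hχdef, Set.indicator_apply, Set.mem_setOf_eq]
  have hχint : Integrable χ P := by
    rw [hχeq]; exact (integrable_const (1:ℝ)).indicator hAmeas
  have hχval : ∫ ω, χ ω ∂P = γ := by
    rw [hχeq, hγdef, integral_indicator hAmeas]
    simp
    rfl
  have hTχeq : (fun ω => T ω * χ ω) = Set.indicator {ω | T ω ≤ q} T := by
    funext ω; by_cases h : T ω ≤ q <;> simp [hχdef, Set.indicator_apply, Set.mem_setOf_eq, h]
  have hTχint : Integrable (fun ω => T ω * χ ω) P := by
    rw [hTχeq]; exact hTint.indicator hAmeas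
  have hτ' : ∫ ω, T ω * χ ω ∂P = τ * γ := hτ
  -- (q - T) * χ has integral (q - τ) * γ
  have hqTval : ∫ ω, (q - T ω) * χ ω ∂P = (q - τ) * γ := by
    have e : (fun ω => (q - T ω) * χ ω) = fun ω => q * χ ω - T ω * χ ω := by
      funext ω; ring
    rw [e, integral_sub (hχint.const_mul q) hTχint, integral_const_mul, hχval, hτ']; ring
  -- τ < q
  have hτq : τ < q := by
    have hnn : 0 ≤ fun ω => (q - T ω) * χ ω := by
      intro ω
      by_cases h : T ω ≤ q
      · simp only [Pi.zero_apply, hχdef, if_pos h, mul_one]; linarith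
      · simp [hχdef, if_neg h]
    have hqTint : Integrable (fun ω => (q - T ω) * χ ω) P := by
      have e : (fun ω => (q - T ω) * χ ω) = fun ω => q * χ ω - T ω * χ ω := by
        funext ω; ring
      rw [e]; exact (hχint.const_mul q).sub hTχint
    have hsupp : Function.support (fun ω => (q - T ω) * χ ω) = {ω | T ω < q} := by
      ext ω
      by_cases h : T ω ≤ q
      · rcases lt_or_eq_of_le h with h' | h'
        · simp [hχdef, h, Function.mem_support, sub_ne_zero, h'.ne', h']
        · simp [hχdef, h, Function.mem_support, h', not_lt.2 (le_of_eq h'.symm)]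
      · simp [hχdef, h, Function.mem_support, not_lt.2 (le_of_not_ge h)]
    have hlt : 0 < P {ω | T ω < q} := by
      have hsub : {ω | T ω ≤ q} ⊆ {ω | T ω < q} ∪ {ω | T ω = q} := by
        intro ω h
        simp only [Set.mem_setOf_eq] at h
        rcases lt_or_eq_of_le h with h' | h'
        · exact Or.inl h'
        · exact Or.inr h'
      have h1 : P {ω | T ω ≤ q} ≠ 0 := by
        intro h0
        rw [hγdef, h0] at hγ0; simp at hγ0
      have h2 : P {ω | T ω ≤ q} ≤ P {ω | T ω < q} := by
        calc P {ω | T ω ≤ q} ≤ P ({ω | T ω < q} ∪ {ω | T ω = q}) := measure_mono hsub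
          _ ≤ P {ω | T ω < q} + P {ω | T ω = q} := measure_union_le _ _
          _ = P {ω | T ω < q} := by rw [hatomless q, add_zero]
      exact lt_of_lt_of_le (pos_iff_ne_zero.2 h1) h2
    have hpos : 0 < ∫ ω, (q - T ω) * χ ω ∂P := by
      rw [integral_pos_iff_support_of_nonneg hnn hqTint, hsupp]
      exact hlt
    rw [hqTval] at hpos
    nlinarith
  -- lower bound : for every c ≥ 0, γ ≤ E[max 0 (c(τ-T)+1)]
  have hintmax : ∀ c : ℝ, Integrable (fun ω => max 0 (c * (τ - T ω) + 1)) P := by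
    intro c
    have h1 : Integrable (fun ω => c * (τ - T ω) + 1) P :=
      ((((integrable_const τ).sub hTint).const_mul c).add (integrable_const 1))
    have := h1.pos_part
    simpa [max_comm] using this
  have hlb : ∀ c : ℝ, 0 ≤ c → γ ≤ ∫ ω, max 0 (c * (τ - T ω) + 1) ∂P := by
    intro c hc
    have e : (fun ω => (c * (τ - T ω) + 1) * χ ω)
        = fun ω => (c * τ + 1) * χ ω - c * (T ω * χ ω) := by
      funext ω; ring
    have hint2 : Integrable (fun ω => (c * (τ - T ω) + 1) * χ ω) P := by
      rw [e]; exact (hχint.const_mul _).sub (hTχint.const_mul c)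
    have heq : ∫ ω, (c * (τ - T ω) + 1) * χ ω ∂P = γ := by
      rw [e, integral_sub (hχint.const_mul _) (hTχint.const_mul c),
        integral_const_mul, integral_const_mul, hχval, hτ']; ring
    have hmono : ∀ ω, (c * (τ - T ω) + 1) * χ ω ≤ max 0 (c * (τ - T ω) + 1) := by
      intro ω; by_cases h : T ω ≤ q <;> simp [hχdef, h]
    calc γ = ∫ ω, (c * (τ - T ω) + 1) * χ ω ∂P := heq.symm
      _ ≤ ∫ ω, max 0 (c * (τ - T ω) + 1) ∂P := integral_mono hint2 (hintmax c) hmono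
  -- attained value at c* = (q - τ)⁻¹
  have hqτ : (0:ℝ) < q - τ := by linarith
  have hval : ∫ ω, max 0 ((q - τ)⁻¹ * (τ - T ω) + 1) ∂P = γ := by
    have hpt : ∀ ω, max 0 ((q - τ)⁻¹ * (τ - T ω) + 1) = (q - τ)⁻¹ * ((q - T ω) * χ ω) := by
      intro ω
      have h1 : (q - τ)⁻¹ * (τ - T ω) + 1 = (q - τ)⁻¹ * (q - T ω) := by
        field_simp
        ring
      rw [h1]
      by_cases h : T ω ≤ q
      · simp only [hχdef, if_pos h, mul_one]
        exact max_eq_right (mul_nonneg (le_of_lt (inv_pos.2 hqτ)) (by linarith))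
      · simp only [hχdef, if_neg h, mul_zero, mul_zero]
        refine max_eq_left ?_
        have h2 : q - T ω < 0 := by linarith [lt_of_not_ge h]
        nlinarith [inv_pos.2 hqτ]
    simp_rw [hpt]
    rw [integral_const_mul, hqTval]
    field_simp
  have hbdd : BddBelow (Set.range fun c : Set.Ici (0:ℝ) =>
      ∫ ω, max 0 ((c : ℝ) * (τ - T ω) + 1) ∂P) := by
    refine ⟨γ, ?_⟩
    rintro x ⟨c, rfl⟩
    exact hlb c c.2
  have hmem : ((q - τ)⁻¹ : ℝ) ∈ Set.Ici (0:ℝ) := le_of_lt (inv_pos.2 hqτ)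
  have hinf : (⨅ c : Set.Ici (0 : ℝ), ∫ ω, max 0 ((c : ℝ) * (τ - T ω) + 1) ∂P) = γ := by
    apply le_antisymm
    · calc (⨅ c : Set.Ici (0 : ℝ), ∫ ω, max 0 ((c : ℝ) * (τ - T ω) + 1) ∂P)
          ≤ ∫ ω, max 0 (((q - τ)⁻¹ : ℝ) * (τ - T ω) + 1) ∂P := ciInf_le hbdd ⟨(q - τ)⁻¹, hmem⟩
        _ = γ := hval
    · exact le_ciInf fun c => hlb c c.2
  refine ⟨hinf, ?_⟩
  rw [hinf]
  have hcompl : {ω | q < T ω} = {ω | T ω ≤ q}ᶜ := by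
    ext ω; simp [not_le]
  rw [hcompl, measure_compl hAmeas (measure_ne_top P _), measure_univ,
    ENNReal.toReal_sub_of_le prob_le_one ENNReal.one_ne_top, ENNReal.toReal_one, hγdef]
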